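/- arXiv:1710.06095 — 2 statements merged into one kernel-verified Lean document; each statement's English description precedes it below -/
import Mathlib

section
/- In G(Σ, e) one has the relation Σ_{i=1}^{2^ν} Ψ_{t_i} = −(12s₂ + 9·2^ν)·Ψ_t. -/
/-- The subgroup of relations: `e s • ψ s - e t • ψ t` for all `s t`, together with
`∑ s, ψ s`. -/
noncomputable def relSub {S : Type*} [Fintype S] (e : S → ℤ) : AddSubgroup (S →₀ ℤ) :=
  AddSubgroup.closure
    ({x | ∃ s t : S, x = Finsupp.single s (e s) - Finsupp.single t (e t)} ∪
      {∑ s : S, Finsupp.single s 1})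

/-- `G(Σ, e)`: the quotient of the free abelian group on `Σ` by the relations. -/
abbrev CompGrp {S : Type*} [Fintype S] (e : S → ℤ) : Type _ :=
  (S →₀ ℤ) ⧸ relSub e

/-- `Ψ s`: the image of the basis element `ψ s` in `G(Σ, e)`. -/
noncomputable def Psi {S : Type*} [Fintype S] (e : S → ℤ) (s : S) : CompGrp e :=
  QuotientAddGroup.mk (Finsupp.single s 1)

/-- `Σ = Σ₂ ⊔ Σ₄ ⊔ Σ₆` with `#Σ₂ = s₂` and `#Σ₄ = #Σ₆ = 2^ν`. -/
abbrev Sig4 (s₂ ν : ℕ) : Type := Fin s₂ ⊕ (Fin (2 ^ ν) ⊕ Fin (2 ^ ν))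

/-- `e ≡ 1` on `Σ₂`, `e ≡ 2` on `Σ₄` and `e ≡ 3` on `Σ₆`. -/
def e4 (s₂ ν : ℕ) : Sig4 s₂ ν → ℤ :=
  Sum.elim (fun _ => 1) (Sum.elim (fun _ => 2) (fun _ => 3))

/-- `w i` (`1`-based): the `i`-th point of `Σ₄ = {w_1, …, w_{2^ν}}`. -/
def wPt4 (s₂ ν : ℕ) (i : ℕ) : Sig4 s₂ ν :=
  Sum.inr (Sum.inl ⟨(i - 1) % 2 ^ ν, Nat.mod_lt _ (Nat.pow_pos (by norm_num))⟩)

/-- `t i` (`1`-based): the `i`-th point of `Σ₆ = {t_1, …, t_{2^ν}}`. -/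
def tPt4 (s₂ ν : ℕ) (i : ℕ) : Sig4 s₂ ν :=
  Sum.inr (Sum.inr ⟨(i - 1) % 2 ^ ν, Nat.mod_lt _ (Nat.pow_pos (by norm_num))⟩)

/-- The generators `u_j` (`1`-based, `u_0 := Ψ w` with `w = w_{2^ν - 1}`):
for `1 ≤ k ≤ 2^{ν-1} - 2`, `u_{2k-1} = Ψ w_{2k-1} - Ψ w` and
`u_{2k} = Ψ w_{2k-1} + Ψ w_{2k} - Ψ w - Ψ w'` (with `w' = w_{2^ν}`); and
`u_{2^ν-3} = Ψ w_{2^ν-3} - Ψ w` (the odd-index formula again),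
`u_{2^ν-2} = Ψ w_{2^ν-3} - Ψ w_{2^ν-2}`. -/
noncomputable def uGen4 (s₂ ν : ℕ) : ℕ → CompGrp (e4 s₂ ν) := fun j =>
  if j = 0 then Psi (e4 s₂ ν) (wPt4 s₂ ν (2 ^ ν - 1))
  else if j = 2 ^ ν - 2 then
    Psi (e4 s₂ ν) (wPt4 s₂ ν (2 ^ ν - 3)) - Psi (e4 s₂ ν) (wPt4 s₂ ν (2 ^ ν - 2))
  else if j % 2 = 1 then
    Psi (e4 s₂ ν) (wPt4 s₂ ν j) - Psi (e4 s₂ ν) (wPt4 s₂ ν (2 ^ ν - 1))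
  else
    Psi (e4 s₂ ν) (wPt4 s₂ ν (j - 1)) + Psi (e4 s₂ ν) (wPt4 s₂ ν j)
      - Psi (e4 s₂ ν) (wPt4 s₂ ν (2 ^ ν - 1)) - Psi (e4 s₂ ν) (wPt4 s₂ ν (2 ^ ν))

/-- The generators `v_j` (`1`-based): `v_{2k-1} = Ψ t_{2k-1} - Ψ t_{2k}` for
`1 ≤ k ≤ 2^{ν-1}` and `v_{2k} = Ψ t_{2k-1} + Ψ t_{2k} - Ψ t - Ψ t'` for
`1 ≤ k ≤ 2^{ν-1} - 1` (with `t = t_{2^ν - 1}`, `t' = t_{2^ν}`). -/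
noncomputable def vGen4 (s₂ ν : ℕ) : ℕ → CompGrp (e4 s₂ ν) := fun j =>
  if j % 2 = 1 then
    Psi (e4 s₂ ν) (tPt4 s₂ ν j) - Psi (e4 s₂ ν) (tPt4 s₂ ν (j + 1))
  else
    Psi (e4 s₂ ν) (tPt4 s₂ ν (j - 1)) + Psi (e4 s₂ ν) (tPt4 s₂ ν j)
      - Psi (e4 s₂ ν) (tPt4 s₂ ν (2 ^ ν - 1)) - Psi (e4 s₂ ν) (tPt4 s₂ ν (2 ^ ν))

lemma rel1 {S : Type*} [Fintype S] (e : S → ℤ) (s t : S) :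
    e s • Psi e s = e t • Psi e t := by
  unfold Psi
  have h1 : ∀ u : S, e u • (QuotientAddGroup.mk (Finsupp.single u (1:ℤ)) : CompGrp e)
      = QuotientAddGroup.mk (Finsupp.single u (e u)) := by
    intro u
    rw [← QuotientAddGroup.mk_zsmul]
    congr 1
    simp [Finsupp.smul_single]
  rw [h1, h1, QuotientAddGroup.eq]
  have : Finsupp.single t (e t) - Finsupp.single s (e s) ∈ relSub e :=
    AddSubgroup.subset_closure (Or.inl ⟨t, s, rfl⟩)
  simpa [neg_add_eq_sub] using this

lemma rel2 {S : Type*} [Fintype S] (e : S → ℤ) : ∑ s : S, Psi e s = 0 := by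
  unfold Psi
  have : ∑ s : S, (QuotientAddGroup.mk (Finsupp.single s (1:ℤ)) : CompGrp e)
      = QuotientAddGroup.mk (∑ s : S, Finsupp.single s (1:ℤ)) :=
    (map_sum (QuotientAddGroup.mk' (relSub e)) (fun s => Finsupp.single s 1)
      Finset.univ).symm
  rw [this, QuotientAddGroup.eq_zero_iff]
  exact AddSubgroup.subset_closure (Or.inr rfl)

/-- in `G(Σ, e)` one has `∑_{i=1}^{2^ν} Ψ t_i = -(12s₂ + 9·2^ν) • Ψ t`,
where `t = t_{2^ν - 1}`. -/
theorem stmt13 (s₂ ν : ℕ) (hν : 1 ≤ ν) :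
    ∑ i ∈ Finset.Icc 1 (2 ^ ν), Psi (e4 s₂ ν) (tPt4 s₂ ν i) =
      -((12 * s₂ + 9 * 2 ^ ν) • Psi (e4 s₂ ν) (tPt4 s₂ ν (2 ^ ν - 1))) := by
  set T := Psi (e4 s₂ ν) (tPt4 s₂ ν (2 ^ ν - 1)) with hT
  have h3 : ∀ s : Sig4 s₂ ν, (e4 s₂ ν s) • Psi (e4 s₂ ν) s = (3:ℤ) • T := by
    intro s
    have h := rel1 (e4 s₂ ν) s (tPt4 s₂ ν (2 ^ ν - 1))
    rw [hT]
    convert h using 2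
    rfl
  have hs : ∀ a : Fin s₂, (4:ℤ) • Psi (e4 s₂ ν) (Sum.inl a) = (12:ℤ) • T := by
    intro a
    have h := h3 (Sum.inl a)
    rw [show e4 s₂ ν (Sum.inl a) = 1 from rfl, one_smul] at h
    rw [h, smul_smul]; norm_num
  have hw : ∀ b : Fin (2 ^ ν), (4:ℤ) • Psi (e4 s₂ ν) (Sum.inr (Sum.inl b)) = (6:ℤ) • T := by
    intro b
    have h := h3 (Sum.inr (Sum.inl b))
    rw [show e4 s₂ ν (Sum.inr (Sum.inl b)) = 2 from rfl] at h
    rw [show (4:ℤ) = 2 * 2 by norm_num, mul_zsmul, h, smul_smul]; norm_num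
  have ht : ∀ c : Fin (2 ^ ν), (4:ℤ) • Psi (e4 s₂ ν) (Sum.inr (Sum.inr c)) =
      Psi (e4 s₂ ν) (Sum.inr (Sum.inr c)) + (3:ℤ) • T := by
    intro c
    have h := h3 (Sum.inr (Sum.inr c))
    rw [show e4 s₂ ν (Sum.inr (Sum.inr c)) = 3 from rfl] at h
    rw [show (4:ℤ) = 1 + 3 by norm_num, add_zsmul, one_zsmul, h]
  have hsum4 : ∑ s : Sig4 s₂ ν, (4:ℤ) • Psi (e4 s₂ ν) s = 0 := by
    rw [← Finset.smul_sum, rel2, smul_zero]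
  rw [Fintype.sum_sum_type, Fintype.sum_sum_type] at hsum4
  rw [Finset.sum_congr rfl (fun a _ => hs a), Finset.sum_congr rfl (fun b _ => hw b),
    Finset.sum_congr rfl (fun c _ => ht c), Finset.sum_add_distrib,
    Finset.sum_const, Finset.sum_const, Finset.sum_const] at hsum4
  simp only [Finset.card_univ, Fintype.card_fin] at hsum4
  -- reindex the goal's sum
  have hpos : 0 < 2 ^ ν := Nat.pow_pos (by norm_num)
  have hre : ∑ i ∈ Finset.Icc 1 (2 ^ ν), Psi (e4 s₂ ν) (tPt4 s₂ ν i)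
      = ∑ c : Fin (2 ^ ν), Psi (e4 s₂ ν) (Sum.inr (Sum.inr c)) := by
    apply Finset.sum_nbij' (i := fun n => (⟨(n - 1) % 2 ^ ν, Nat.mod_lt _ hpos⟩ : Fin (2 ^ ν)))
      (j := fun c => (c : ℕ) + 1)
    · intro a _; exact Finset.mem_univ _
    · intro c _
      simp only [Finset.mem_Icc]
      exact ⟨by omega, by have := c.isLt; omega⟩
    · intro a ha
      simp only [Finset.mem_Icc] at ha
      have h1 : (a - 1) % 2 ^ ν = a - 1 := Nat.mod_eq_of_lt (by omega)
      show (a - 1) % 2 ^ ν + 1 = a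
      omega
    · intro c _
      have hc := c.isLt
      apply Fin.ext
      show ((c : ℕ) + 1 - 1) % 2 ^ ν = (c : ℕ)
      simp [Nat.mod_eq_of_lt hc]
    · intro a ha
      simp only [Finset.mem_Icc] at ha
      rfl
  rw [hre]
  have key : (∑ c : Fin (2 ^ ν), Psi (e4 s₂ ν) (Sum.inr (Sum.inr c)))
      + (((12 * s₂ + 9 * 2 ^ ν : ℕ) : ℤ) • T) = 0 := by
    rw [show ((12 * s₂ + 9 * 2 ^ ν : ℕ) : ℤ) =
      ((s₂ : ℕ) : ℤ) * 12 + (((2 ^ ν : ℕ) : ℤ) * 6 + ((2 ^ ν : ℕ) : ℤ) * 3) by push_cast; ring,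
      add_zsmul, add_zsmul, mul_zsmul, mul_zsmul, mul_zsmul,
      natCast_zsmul, natCast_zsmul, natCast_zsmul]
    rw [← hsum4]
    abel
  rw [eq_neg_iff_add_eq_zero, ← natCast_zsmul]
  exact key
end

section
/- In G(Σ, e), the cyclic subgroup ⟨Ψ_t⟩ generated by Ψ_t is the internal direct sum ⟨3Ψ_t⟩ ⊕ ⟨mΨ_t⟩ of the cyclic subgroups generated by 3Ψ_t and by mΨ_t, where ⟨3Ψ_t⟩ has order m and ⟨mΨ_t⟩ has order 3. -/
section Auxiliary

variable (s₂ ν : ℕ)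

/-- coefficients `6/e(s)` -/
private def myc : Sig4 s₂ ν → ℤ :=
  Sum.elim (fun _ => 6) (Sum.elim (fun _ => 3) (fun _ => 2))

private lemma myc_mul_e (s : Sig4 s₂ ν) : myc s₂ ν s * e4 s₂ ν s = 6 := by
  rcases s with s | s | s <;> simp [myc, e4]

private lemma sum_myc : ∑ s : Sig4 s₂ ν, myc s₂ ν s = ((6 * s₂ + 5 * 2 ^ ν : ℕ) : ℤ) := by
  simp [myc, Fintype.sum_sum_type, Finset.sum_const]
  ring

private lemma key_rel (_hν : 1 ≤ ν) :
    (3 * (6 * s₂ + 5 * 2 ^ ν)) • Finsupp.single (tPt4 s₂ ν (2 ^ ν - 1)) (1 : ℤ)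
      ∈ relSub (e4 s₂ ν) := by
  set t0 := tPt4 s₂ ν (2 ^ ν - 1) with ht0
  have h1 : (∑ s : Sig4 s₂ ν, Finsupp.single s (1 : ℤ)) ∈ relSub (e4 s₂ ν) :=
    AddSubgroup.subset_closure (Or.inr rfl)
  have h2 : ∀ s : Sig4 s₂ ν,
      Finsupp.single s (e4 s₂ ν s) - Finsupp.single t0 (e4 s₂ ν t0) ∈ relSub (e4 s₂ ν) :=
    fun s => AddSubgroup.subset_closure (Or.inl ⟨s, t0, rfl⟩)
  have het0 : e4 s₂ ν t0 = 3 := rfl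
  have hident : (3 * (6 * s₂ + 5 * 2 ^ ν)) • Finsupp.single t0 (1 : ℤ)
      = (6 : ℤ) • (∑ s : Sig4 s₂ ν, Finsupp.single s (1 : ℤ))
        - ∑ s : Sig4 s₂ ν, myc s₂ ν s •
          (Finsupp.single s (e4 s₂ ν s) - Finsupp.single t0 (e4 s₂ ν t0)) := by
    have hS : ∑ s : Sig4 s₂ ν, myc s₂ ν s •
        (Finsupp.single s (e4 s₂ ν s) - Finsupp.single t0 (e4 s₂ ν t0))
        = (∑ s : Sig4 s₂ ν, Finsupp.single s (6 : ℤ))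
          - Finsupp.single t0 (((6 * s₂ + 5 * 2 ^ ν : ℕ) : ℤ) * 3) := by
      simp only [smul_sub, Finset.sum_sub_distrib]
      congr 1
      · refine Finset.sum_congr rfl fun s _ => ?_
        rw [Finsupp.smul_single, smul_eq_mul, myc_mul_e]
      · rw [← Finset.sum_smul, sum_myc, het0, Finsupp.smul_single, smul_eq_mul]
    rw [hS]
    have h6 : (∑ s : Sig4 s₂ ν, Finsupp.single s (6 : ℤ))
        = (6 : ℤ) • ∑ s : Sig4 s₂ ν, Finsupp.single s (1 : ℤ) := by
      rw [Finset.smul_sum]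
      refine Finset.sum_congr rfl fun s _ => ?_
      rw [Finsupp.smul_single, smul_eq_mul, mul_one]
    rw [h6, sub_sub_cancel]
    rw [Finsupp.smul_single]
    congr 1
    push_cast
    ring
  rw [hident]
  exact AddSubgroup.sub_mem _ (AddSubgroup.zsmul_mem _ h1 6)
    (AddSubgroup.sum_mem _ fun s _ => AddSubgroup.zsmul_mem _ (h2 s) _)

/-- values of the character separating `Ψ t` -/
private def amapN : Sig4 s₂ ν → ℕ :=
  Sum.elim (fun _ => 6)
    (Sum.elim (fun i => if (i : ℕ) = 2 ^ ν - 1 then 3 + 3 * (6 * s₂ + 5 * 2 ^ ν) else 3)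
      (fun i => if (i : ℕ) = 2 ^ ν - 1 then 2 + 2 * (6 * s₂ + 5 * 2 ^ ν) else 2))

private noncomputable def phi4 :
    (Sig4 s₂ ν →₀ ℤ) →ₗ[ℤ] ZMod (6 * (6 * s₂ + 5 * 2 ^ ν)) :=
  Finsupp.linearCombination ℤ
    (fun s => ((amapN s₂ ν s : ℕ) : ZMod (6 * (6 * s₂ + 5 * 2 ^ ν))))

private lemma e_smul_amap (s : Sig4 s₂ ν) :
    e4 s₂ ν s • ((amapN s₂ ν s : ℕ) : ZMod (6 * (6 * s₂ + 5 * 2 ^ ν))) = 6 := by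
  have h0 : ((6 * (6 * s₂ + 5 * 2 ^ ν) : ℕ) : ZMod (6 * (6 * s₂ + 5 * 2 ^ ν))) = 0 :=
    ZMod.natCast_self _
  push_cast at h0
  rcases s with s | s | s
  · simp [e4, amapN]
  · by_cases h : (s : ℕ) = 2 ^ ν - 1
    · simp only [e4, amapN, Sum.elim_inr, Sum.elim_inl, if_pos h, zsmul_eq_mul]
      push_cast
      linear_combination h0
    · simp only [e4, amapN, Sum.elim_inr, Sum.elim_inl, if_neg h, zsmul_eq_mul]
      push_cast
      norm_num
  · by_cases h : (s : ℕ) = 2 ^ ν - 1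
    · simp only [e4, amapN, Sum.elim_inr, if_pos h, zsmul_eq_mul]
      push_cast
      linear_combination h0
    · simp only [e4, amapN, Sum.elim_inr, if_neg h, zsmul_eq_mul]
      push_cast
      norm_num

private lemma sum_ite_fin (a b : ℕ) :
    ∑ i : Fin (2 ^ ν), (if (i : ℕ) = 2 ^ ν - 1 then a + b else a) = 2 ^ ν * a + b := by
  have hlt : 2 ^ ν - 1 < 2 ^ ν := by
    have := Nat.one_le_two_pow (n := ν); omega
  have h1 : ∀ i : Fin (2 ^ ν), (if (i : ℕ) = 2 ^ ν - 1 then a + b else a)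
      = a + (if i = (⟨2 ^ ν - 1, hlt⟩ : Fin (2 ^ ν)) then b else 0) := by
    intro i
    by_cases h : i = (⟨2 ^ ν - 1, hlt⟩ : Fin (2 ^ ν))
    · simp [h]
    · have : ¬ ((i : ℕ) = 2 ^ ν - 1) := fun hc => h (Fin.ext hc)
      simp [h, this]
  simp only [h1, Finset.sum_add_distrib, Finset.sum_const, Finset.card_univ, Fintype.card_fin,
    smul_eq_mul, Finset.sum_ite_eq', Finset.mem_univ, if_true]

private lemma sum_amap : ∑ s : Sig4 s₂ ν, amapN s₂ ν s = 6 * (6 * s₂ + 5 * 2 ^ ν) := by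
  rw [Fintype.sum_sum_type, Fintype.sum_sum_type]
  simp only [amapN, Sum.elim_inl, Sum.elim_inr]
  rw [sum_ite_fin, sum_ite_fin]
  simp only [Finset.sum_const, Finset.card_univ, Fintype.card_fin, smul_eq_mul]
  ring

private lemma rel_le_ker :
    relSub (e4 s₂ ν) ≤ AddMonoidHom.ker (phi4 s₂ ν).toAddMonoidHom := by
  rw [relSub]
  rw [AddSubgroup.closure_le]
  rintro x (⟨s, t, rfl⟩ | hx)
  · simp only [SetLike.mem_coe, AddMonoidHom.mem_ker, LinearMap.toAddMonoidHom_coe, map_sub]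
    rw [phi4, Finsupp.linearCombination_single, Finsupp.linearCombination_single,
      e_smul_amap, e_smul_amap, sub_self]
  · simp only [Set.mem_singleton_iff] at hx
    subst hx
    simp only [SetLike.mem_coe, AddMonoidHom.mem_ker, LinearMap.toAddMonoidHom_coe, map_sum]
    rw [phi4]
    simp only [Finsupp.linearCombination_single, one_smul]
    rw [← Nat.cast_sum, sum_amap, ZMod.natCast_self]

private noncomputable def phiBar :
    CompGrp (e4 s₂ ν) →+ ZMod (6 * (6 * s₂ + 5 * 2 ^ ν)) :=
  QuotientAddGroup.lift (relSub (e4 s₂ ν)) (phi4 s₂ ν).toAddMonoidHom (rel_le_ker s₂ ν)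

private lemma phiBar_psi (s : Sig4 s₂ ν) :
    phiBar s₂ ν (Psi (e4 s₂ ν) s) = ((amapN s₂ ν s : ℕ) : ZMod (6 * (6 * s₂ + 5 * 2 ^ ν))) := by
  show (phi4 s₂ ν).toAddMonoidHom (Finsupp.single s 1) = _
  simp [phi4, Finsupp.linearCombination_single]

private lemma addOrder_x (hν : 1 ≤ ν) :
    addOrderOf (Psi (e4 s₂ ν) (tPt4 s₂ ν (2 ^ ν - 1))) = 3 * (6 * s₂ + 5 * 2 ^ ν) := by
  set M := 6 * s₂ + 5 * 2 ^ ν with hM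
  have h2pow : 2 ≤ 2 ^ ν := by
    calc 2 = 2 ^ 1 := rfl
    _ ≤ 2 ^ ν := Nat.pow_le_pow_right (by norm_num) hν
  have hMpos : 0 < M := by positivity
  set x := Psi (e4 s₂ ν) (tPt4 s₂ ν (2 ^ ν - 1)) with hx
  -- upper bound
  have hA : (3 * M) • x = 0 := by
    have : (3 * M) • x = QuotientAddGroup.mk
        ((3 * M) • Finsupp.single (tPt4 s₂ ν (2 ^ ν - 1)) (1 : ℤ)) := by
      rw [hx, Psi]
      exact ((QuotientAddGroup.mk' (relSub (e4 s₂ ν))).map_nsmul _ _).symm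
    rw [this, QuotientAddGroup.eq_zero_iff]
    exact key_rel s₂ ν hν
  -- lower bound
  have hval : phiBar s₂ ν x = ((2 : ℕ) : ZMod (6 * M)) := by
    rw [hx, phiBar_psi]
    congr 1
    have hne : (2 ^ ν - 1 - 1) % 2 ^ ν ≠ 2 ^ ν - 1 := by
      rw [Nat.mod_eq_of_lt (by omega)]; omega
    simp [tPt4, amapN, hne]
  have hord2 : addOrderOf ((2 : ℕ) : ZMod (6 * M)) = 3 * M := by
    rw [ZMod.addOrderOf_coe 2 (by positivity)]
    rw [Nat.gcd_eq_right ⟨3 * M, by ring⟩]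
    rw [show 6 * M = 2 * (3 * M) by ring]
    exact Nat.mul_div_cancel_left _ (by norm_num)
  have hdvd1 : addOrderOf x ∣ 3 * M := addOrderOf_dvd_of_nsmul_eq_zero hA
  have hdvd2 : 3 * M ∣ addOrderOf x := by
    rw [← hord2, ← hval]
    exact addOrderOf_map_dvd (phiBar s₂ ν) x
  exact Nat.dvd_antisymm hdvd1 hdvd2

private lemma cop3M : Nat.Coprime 3 (6 * s₂ + 5 * 2 ^ ν) := by
  rw [Nat.Prime.coprime_iff_not_dvd (by norm_num)]
  intro h
  have h1 : 3 ∣ 5 * 2 ^ ν := by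
    have := Nat.dvd_sub h (⟨2 * s₂, by ring⟩ : 3 ∣ 6 * s₂)
    rwa [Nat.add_sub_cancel_left] at this
  rcases (Nat.Prime.dvd_mul (by norm_num)).1 h1 with h2 | h2
  · norm_num at h2
  · have := Nat.Prime.dvd_of_dvd_pow (p := 3) (by norm_num) h2
    norm_num at this

end Auxiliary

/-- in `G(Σ, e)` the cyclic subgroup `⟨Ψ t⟩` (with `t = t_{2^ν - 1}`)
is the internal direct sum `⟨3Ψ t⟩ ⊕ ⟨mΨ t⟩` (`m = 6s₂ + 5·2^ν`): the two subgroups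
intersect trivially, their sup is `⟨Ψ t⟩`, `⟨3Ψ t⟩` has order `m` and `⟨mΨ t⟩` has
order `3`. -/
theorem stmt16 (s₂ ν : ℕ) (hν : 1 ≤ ν) :
    AddSubgroup.zmultiples ((3 : ℕ) • Psi (e4 s₂ ν) (tPt4 s₂ ν (2 ^ ν - 1))) ⊔
      AddSubgroup.zmultiples ((6 * s₂ + 5 * 2 ^ ν) • Psi (e4 s₂ ν) (tPt4 s₂ ν (2 ^ ν - 1)))
      = AddSubgroup.zmultiples (Psi (e4 s₂ ν) (tPt4 s₂ ν (2 ^ ν - 1))) ∧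
    AddSubgroup.zmultiples ((3 : ℕ) • Psi (e4 s₂ ν) (tPt4 s₂ ν (2 ^ ν - 1))) ⊓
      AddSubgroup.zmultiples ((6 * s₂ + 5 * 2 ^ ν) • Psi (e4 s₂ ν) (tPt4 s₂ ν (2 ^ ν - 1)))
      = ⊥ ∧
    Nat.card (AddSubgroup.zmultiples ((3 : ℕ) • Psi (e4 s₂ ν) (tPt4 s₂ ν (2 ^ ν - 1))))
      = 6 * s₂ + 5 * 2 ^ ν ∧
    Nat.card (AddSubgroup.zmultiples
      ((6 * s₂ + 5 * 2 ^ ν) • Psi (e4 s₂ ν) (tPt4 s₂ ν (2 ^ ν - 1)))) = 3 := by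
  set M := 6 * s₂ + 5 * 2 ^ ν with hM
  set x := Psi (e4 s₂ ν) (tPt4 s₂ ν (2 ^ ν - 1)) with hxdef
  have h2pow : 2 ≤ 2 ^ ν := by
    calc 2 = 2 ^ 1 := rfl
    _ ≤ 2 ^ ν := Nat.pow_le_pow_right (by norm_num) hν
  have hMpos : 0 < M := by positivity
  have hx : addOrderOf x = 3 * M := addOrder_x s₂ ν hν
  have hfin : IsOfFinAddOrder x := addOrderOf_pos_iff.1 (by omega)
  have hcop : Nat.Coprime 3 M := cop3M s₂ ν
  have hord3 : addOrderOf ((3 : ℕ) • x) = M := by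
    rw [hfin.addOrderOf_nsmul, hx, Nat.gcd_eq_right ⟨M, by ring⟩]
    exact Nat.mul_div_cancel_left _ (by norm_num)
  have hordM : addOrderOf (M • x) = 3 := by
    rw [hfin.addOrderOf_nsmul, hx, Nat.gcd_eq_right ⟨3, by ring⟩]
    exact Nat.mul_div_cancel _ hMpos
  have hcopZ : IsCoprime ((3 : ℕ) : ℤ) ((M : ℕ) : ℤ) := by
    rw [Nat.isCoprime_iff_coprime]
    exact hcop
  push_cast at hcopZ
  refine ⟨?_, ?_, ?_, ?_⟩
  · apply le_antisymm
    · apply sup_le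
      · exact AddSubgroup.zmultiples_le.2 ⟨3, natCast_zsmul x 3⟩
      · exact AddSubgroup.zmultiples_le.2 ⟨(M : ℤ), natCast_zsmul x M⟩
    · rw [AddSubgroup.zmultiples_le]
      obtain ⟨a, b, hab⟩ := hcopZ
      have hx1 : x = a • ((3 : ℕ) • x) + b • (M • x) := by
        rw [← natCast_zsmul x 3, ← natCast_zsmul x M, ← mul_zsmul, ← mul_zsmul,
          ← add_zsmul]
        push_cast
        rw [hab, one_zsmul]
      have hmem : a • ((3 : ℕ) • x) + b • (M • x) ∈
          AddSubgroup.zmultiples ((3 : ℕ) • x) ⊔ AddSubgroup.zmultiples (M • x) :=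
        AddSubgroup.add_mem _
          (AddSubgroup.mem_sup_left
            (AddSubgroup.zsmul_mem _ (AddSubgroup.mem_zmultiples _) a))
          (AddSubgroup.mem_sup_right
            (AddSubgroup.zsmul_mem _ (AddSubgroup.mem_zmultiples _) b))
      rwa [← hx1] at hmem
  · rw [eq_bot_iff]
    rintro y ⟨hy1, hy2⟩
    obtain ⟨c, hc⟩ := AddSubgroup.mem_zmultiples_iff.1 hy1
    obtain ⟨d, hd⟩ := AddSubgroup.mem_zmultiples_iff.1 hy2
    rw [← natCast_zsmul x 3, ← mul_zsmul] at hc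
    rw [← natCast_zsmul x M, ← mul_zsmul] at hd
    push_cast at hc
    have hzero : (c * 3 - d * (M : ℤ)) • x = 0 := by
      rw [sub_zsmul, hc, hd]
      simp
    have hdvd : ((3 * M : ℕ) : ℤ) ∣ c * 3 - d * (M : ℤ) := by
      rw [← hx]
      exact addOrderOf_dvd_iff_zsmul_eq_zero.2 hzero
    have hMdvd : (M : ℤ) ∣ c * 3 := by
      have h1 : (M : ℤ) ∣ c * 3 - d * (M : ℤ) := by
        refine dvd_trans ⟨3, by push_cast; ring⟩ hdvd
      have h2 : (M : ℤ) ∣ d * (M : ℤ) := ⟨d, mul_comm _ _⟩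
      have h3 := dvd_add h1 h2
      rwa [sub_add_cancel] at h3
    have hMc : (M : ℤ) ∣ c := hcopZ.symm.dvd_of_dvd_mul_right hMdvd
    have : (c * 3) • x = 0 := by
      rw [← addOrderOf_dvd_iff_zsmul_eq_zero, hx]
      obtain ⟨e, he⟩ := hMc
      exact ⟨e, by push_cast; rw [he]; ring⟩
    rw [AddSubgroup.mem_bot, ← hc]
    exact this
  · rw [Nat.card_zmultiples, hord3]
  · rw [Nat.card_zmultiples, hordM]
end
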